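/- There exists a constant C > 0 such that for every integer n ≥ 2 and every real u with −√n ≤ u, one has F_n(u) ≤ C · 2^{−|u|}. -/

import Mathlib

open Real Filter Set

/-- For `n ≥ 1` and `u ≥ -√n`,
`F_n(u) = binom(2n + ⌊u√n⌋, n) · √n / 2^{2n + ⌊u√n⌋}`. -/
noncomputable def Fbin (n : ℕ) (u : ℝ) : ℝ :=
  (Nat.choose ((2 * (n : ℤ) + ⌊u * Real.sqrt n⌋).toNat) n : ℝ) * Real.sqrt n
    / (2 : ℝ) ^ ((2 * (n : ℤ) + ⌊u * Real.sqrt n⌋).toNat)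

namespace FbinAux

noncomputable def A (n d : ℕ) : ℝ := (Nat.choose (n + d) n : ℝ) / 2 ^ (n + d)

lemma A_pos (n d : ℕ) : 0 < A n d := by
  apply div_pos
  · exact_mod_cast Nat.choose_pos (Nat.le_add_right n d)
  · positivity

lemma choose_ratio (n d : ℕ) (hn : 1 ≤ n) :
    (d + 1) * Nat.choose (n + d + 1) n = (n + d + 1) * Nat.choose (n + d) n := by
  obtain ⟨p, rfl⟩ : ∃ p, n = p + 1 := ⟨n - 1, by omega⟩
  have h1 : Nat.choose (p + d + 1) (p + 1) * (p + 1)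
      = Nat.choose (p + d + 1) p * (d + 1) := by
    have := Nat.choose_succ_right_eq (p + d + 1) p
    simpa [Nat.add_sub_cancel_left, show p + d + 1 - p = d + 1 by omega] using this
  have h2 : Nat.choose (p + 1 + d + 1) (p + 1)
      = Nat.choose (p + d + 1) p + Nat.choose (p + d + 1) (p + 1) := by
    have := Nat.choose_succ_succ (p + d + 1) p
    simpa [show p + 1 + d + 1 = p + d + 1 + 1 by omega] using this
  rw [h2]
  have h3 : p + 1 + d = p + d + 1 := by omega
  rw [h3]
  nlinarith [h1]

lemma A_succ (n d : ℕ) (hn : 1 ≤ n) :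
    A n (d + 1) = A n d * (((n : ℝ) + d + 1) / (2 * ((d : ℝ) + 1))) := by
  have h := choose_ratio n d hn
  have h' : ((d : ℝ) + 1) * (Nat.choose (n + d + 1) n : ℝ)
      = ((n : ℝ) + d + 1) * (Nat.choose (n + d) n : ℝ) := by exact_mod_cast h
  unfold A
  have hpos : (0:ℝ) < 2 ^ (n + d) := by positivity
  have hd : (0:ℝ) < (d:ℝ) + 1 := by positivity
  have hnd : n + (d + 1) = (n + d) + 1 := by omega
  rw [hnd, pow_succ]
  field_simp
  linear_combination h'

lemma A_le_center (n d : ℕ) (hn : 1 ≤ n) : A n d ≤ A n n := by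
  have up : ∀ d, d < n → A n d ≤ A n (d + 1) := by
    intro d hd
    rw [A_succ n d hn]
    have h1 : (1:ℝ) ≤ ((n : ℝ) + d + 1) / (2 * ((d : ℝ) + 1)) := by
      rw [le_div_iff₀ (by positivity)]
      have : (d:ℝ) + 1 ≤ n := by exact_mod_cast hd
      linarith
    nlinarith [A_pos n d]
  have down : ∀ d, n ≤ d → A n (d + 1) ≤ A n d := by
    intro d hd
    rw [A_succ n d hn]
    have h1 : ((n : ℝ) + d + 1) / (2 * ((d : ℝ) + 1)) ≤ 1 := by
      rw [div_le_one (by positivity)]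
      have : (n:ℝ) ≤ d := by exact_mod_cast hd
      linarith
    nlinarith [A_pos n d]
  rcases le_or_gt d n with h | h
  · have key : ∀ j, j ≤ n → A n (n - j) ≤ A n n := by
      intro j
      induction j with
      | zero => simp
      | succ i ih =>
        intro hij
        have h1 : n - (i + 1) < n := by omega
        have h2 : n - (i + 1) + 1 = n - i := by omega
        calc A n (n - (i+1)) ≤ A n (n - (i+1) + 1) := up _ h1
          _ = A n (n - i) := by rw [h2]
          _ ≤ A n n := ih (by omega)
    have := key (n - d) (by omega)
    simpa [show n - (n - d) = d by omega] using this
  · obtain ⟨e, rfl⟩ : ∃ e, d = n + e := ⟨d - n, by omega⟩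
    clear h
    induction e with
    | zero => simp
    | succ i ih =>
      calc A n (n + (i + 1)) = A n ((n + i) + 1) := by ring_nf
        _ ≤ A n (n + i) := down _ (by omega)
        _ ≤ A n n := ih

lemma central_sq (n : ℕ) : (Nat.choose (2 * n) n) ^ 2 * (3 * n + 1) ≤ 16 ^ n := by
  induction n with
  | zero => simp
  | succ p ih =>
    have key : (p + 1) * Nat.choose (2 * (p + 1)) (p + 1)
        = 2 * (2 * p + 1) * Nat.choose (2 * p) p := Nat.succ_mul_centralBinom_succ p
    have h1 : ((p:ℤ) + 1) * Nat.choose (2 * (p + 1)) (p + 1)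
        = 2 * (2 * (p:ℤ) + 1) * Nat.choose (2 * p) p := by exact_mod_cast key
    have h2 : ((Nat.choose (2 * p) p : ℤ)) ^ 2 * (3 * p + 1) ≤ 16 ^ p := by exact_mod_cast ih
    have goal' : ((Nat.choose (2 * (p+1)) (p+1) : ℤ)) ^ 2 * (3 * (p+1) + 1) ≤ 16 ^ (p+1) := by
      have hp1 : (0:ℤ) < ((p:ℤ)+1)^2 * (3*p+1) := by positivity
      have hkey2 : ((p:ℤ)+1)^2 * (Nat.choose (2 * (p + 1)) (p + 1) :ℤ)^2
          = 4 * (2*(p:ℤ)+1)^2 * (Nat.choose (2 * p) p :ℤ)^2 := by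
        linear_combination (((p:ℤ)+1) * (Nat.choose (2 * (p + 1)) (p + 1) :ℤ)
          + 2*(2*(p:ℤ)+1) * (Nat.choose (2 * p) p :ℤ)) * h1
      have hpoly : 4 * (2*(p:ℤ)+1)^2 * (3*(p:ℤ)+4) ≤ 16 * ((p:ℤ)+1)^2 * (3*p+1) := by
        nlinarith [Nat.cast_nonneg (α := ℤ) p]
      have big : ((p:ℤ)+1)^2 * (3*(p:ℤ)+1)
            * (((Nat.choose (2 * (p+1)) (p+1) : ℤ)) ^ 2 * (3 * ((p:ℤ)+1) + 1))
          ≤ ((p:ℤ)+1)^2 * (3*(p:ℤ)+1) * 16 ^ (p+1) := by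
        calc ((p:ℤ)+1)^2 * (3*(p:ℤ)+1)
              * (((Nat.choose (2 * (p+1)) (p+1) : ℤ)) ^ 2 * (3 * ((p:ℤ)+1) + 1))
            = (4 * (2*(p:ℤ)+1)^2 * (3*(p:ℤ)+4))
              * ((Nat.choose (2 * p) p :ℤ)^2 * (3*(p:ℤ)+1)) := by
              linear_combination ((3*(p:ℤ)+1)*(3*(p:ℤ)+4)) * hkey2
          _ ≤ (16 * ((p:ℤ)+1)^2 * (3*(p:ℤ)+1)) * 16 ^ p := by
              apply mul_le_mul hpoly h2 (by positivity) (by positivity)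
          _ = ((p:ℤ)+1)^2 * (3*(p:ℤ)+1) * 16 ^ (p+1) := by ring
      exact le_of_mul_le_mul_left big hp1
    exact_mod_cast goal'

lemma central (n : ℕ) : A n n * Real.sqrt n ≤ 1 := by
  have h : ((Nat.choose (2*n) n : ℝ))^2 * (3*n+1) ≤ 16 ^ n := by
    exact_mod_cast central_sq n
  have h2 : ((Nat.choose (2*n) n : ℝ))^2 * n ≤ 16 ^ n := by
    nlinarith [sq_nonneg ((Nat.choose (2*n) n : ℝ)), Nat.cast_nonneg (α := ℝ) n]
  have h3 : (Nat.choose (2*n) n : ℝ) * Real.sqrt n ≤ 4 ^ n := by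
    apply le_of_pow_le_pow_left₀ (n := 2) (by norm_num) (by positivity)
    have hsq : ((4:ℝ) ^ n) ^ 2 = 16 ^ n := by
      rw [← pow_mul, mul_comm, pow_mul]; norm_num
    rw [hsq, mul_pow, Real.sq_sqrt (by positivity)]
    exact h2
  unfold A
  have h4 : (2:ℝ) ^ (n + n) = 4 ^ n := by
    rw [pow_add, ← mul_pow]; norm_num
  have h5 : n + n = 2 * n := by omega
  rw [h5] at h4 ⊢
  rw [h4, div_mul_eq_mul_div, div_le_one (by positivity)]
  simpa using h3

lemma two_rpow_le {s : ℝ} (hs : 1 ≤ s) : (2:ℝ) ^ (s⁻¹) ≤ 1 + s⁻¹ := by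
  have hs0 : (0:ℝ) < s := lt_of_lt_of_le one_pos hs
  have hx0 : (0:ℝ) < s⁻¹ := inv_pos.mpr hs0
  have hb : (2:ℝ) ≤ (1 + s⁻¹) ^ (s:ℝ) := by
    have hber := one_add_mul_self_le_rpow_one_add (s := s⁻¹) (by linarith) (p := s) hs
    have : (2:ℝ) = 1 + s * s⁻¹ := by rw [mul_inv_cancel₀ hs0.ne']; norm_num
    rw [this]; exact hber
  calc (2:ℝ) ^ s⁻¹ ≤ ((1 + s⁻¹) ^ (s:ℝ)) ^ s⁻¹ :=
        Real.rpow_le_rpow (by norm_num) hb hx0.le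
    _ = (1 + s⁻¹) ^ ((s:ℝ) * s⁻¹) := (Real.rpow_mul (by positivity) _ _).symm
    _ = 1 + s⁻¹ := by rw [mul_inv_cancel₀ hs0.ne', Real.rpow_one]

lemma sqrt_ge (n : ℕ) (hn : 2 ≤ n) : (1.41 : ℝ) ≤ Real.sqrt n := by
  rw [show (1.41:ℝ) = Real.sqrt (1.41^2) from (Real.sqrt_sq (by norm_num)).symm]
  apply Real.sqrt_le_sqrt
  have : (2:ℝ) ≤ n := by exact_mod_cast hn
  nlinarith

lemma step_right (n d : ℕ) (hn : 2 ≤ n) (hd : (n:ℝ) + 9 * Real.sqrt n ≤ d) :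
    A n (d + 1) ≤ (2:ℝ) ^ (-(Real.sqrt n)⁻¹) * A n d := by
  have hs14 := sqrt_ge n hn
  have hs0 : (0:ℝ) < Real.sqrt n := by linarith
  have hs2 : Real.sqrt n ^ 2 = n := Real.sq_sqrt (by positivity)
  set s := Real.sqrt n with hsdef
  have h2pos : (0:ℝ) < (2:ℝ) ^ (s⁻¹) := Real.rpow_pos_of_pos (by norm_num) _
  have hkey : ((n : ℝ) + d + 1) / (2 * ((d : ℝ) + 1)) * (2:ℝ) ^ (s⁻¹) ≤ 1 := by
    have h1 : ((n : ℝ) + d + 1) / (2 * ((d : ℝ) + 1)) * (2:ℝ) ^ (s⁻¹)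
        ≤ ((n : ℝ) + d + 1) / (2 * ((d : ℝ) + 1)) * (1 + s⁻¹) := by
      apply mul_le_mul_of_nonneg_left (two_rpow_le (by linarith)) (by positivity)
    have h2 : ((n : ℝ) + d + 1) / (2 * ((d : ℝ) + 1)) * (1 + s⁻¹) ≤ 1 := by
      rw [div_mul_eq_mul_div, div_le_one (by positivity)]
      have hinv : s * s⁻¹ = 1 := mul_inv_cancel₀ hs0.ne'
      have hmain : ((n:ℝ) + d + 1) * (s + 1) ≤ 2 * ((d:ℝ) + 1) * s := by
        nlinarith [mul_nonneg (by linarith : (0:ℝ) ≤ s - 1)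
          (by linarith : (0:ℝ) ≤ (d:ℝ) - (s^2 + 9*s)), sq_nonneg (s - 1.41)]
      have hexp : ((n:ℝ) + d + 1) * (1 + s⁻¹) * s = ((n:ℝ) + d + 1) * (s + 1) := by
        field_simp
        try ring
      nlinarith [hmain, hexp, hs0]
    linarith
  rw [A_succ n d (by omega)]
  have hfin : ((n : ℝ) + d + 1) / (2 * ((d : ℝ) + 1)) ≤ (2:ℝ) ^ (-(s⁻¹)) := by
    rw [Real.rpow_neg (by norm_num)]
    calc ((n : ℝ) + d + 1) / (2 * ((d : ℝ) + 1))
        = ((n : ℝ) + d + 1) / (2 * ((d : ℝ) + 1)) * (2:ℝ) ^ (s⁻¹) * ((2:ℝ) ^ (s⁻¹))⁻¹ := by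
          field_simp
          try ring
      _ ≤ 1 * ((2:ℝ) ^ (s⁻¹))⁻¹ := by
          apply mul_le_mul_of_nonneg_right hkey (by positivity)
      _ = ((2:ℝ) ^ (s⁻¹))⁻¹ := one_mul _
  calc A n d * (((n : ℝ) + d + 1) / (2 * ((d : ℝ) + 1)))
      ≤ A n d * (2:ℝ) ^ (-(s⁻¹)) := by
        apply mul_le_mul_of_nonneg_left hfin (A_pos n d).le
    _ = (2:ℝ) ^ (-(s⁻¹)) * A n d := mul_comm _ _

lemma step_left (n d : ℕ) (hn : 2 ≤ n) (hd : (d:ℝ) + 3 * Real.sqrt n ≤ n) :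
    A n d ≤ (2:ℝ) ^ (-(Real.sqrt n)⁻¹) * A n (d + 1) := by
  have hs14 := sqrt_ge n hn
  have hs0 : (0:ℝ) < Real.sqrt n := by linarith
  have hs2 : Real.sqrt n ^ 2 = n := Real.sq_sqrt (by positivity)
  set s := Real.sqrt n with hsdef
  have h2pos : (0:ℝ) < (2:ℝ) ^ (s⁻¹) := Real.rpow_pos_of_pos (by norm_num) _
  have hratio : (2:ℝ) ^ (s⁻¹) ≤ ((n : ℝ) + d + 1) / (2 * ((d : ℝ) + 1)) := by
    have h1 : (2:ℝ) ^ (s⁻¹) ≤ 1 + s⁻¹ := two_rpow_le (by linarith)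
    have h2 : 1 + s⁻¹ ≤ ((n : ℝ) + d + 1) / (2 * ((d : ℝ) + 1)) := by
      rw [le_div_iff₀ (by positivity)]
      have hmain : 2 * ((d:ℝ) + 1) * (s + 1) ≤ ((n:ℝ) + d + 1) * s := by
        nlinarith [mul_nonneg (by linarith : (0:ℝ) ≤ s + 2)
          (by linarith : (0:ℝ) ≤ s^2 - 3*s - (d:ℝ)), sq_nonneg s]
      have hexp : (1 + s⁻¹) * (2 * ((d:ℝ) + 1)) * s = 2 * ((d:ℝ) + 1) * (s + 1) := by
        field_simp
        try ring
      nlinarith [hmain, hexp, hs0]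
    linarith
  rw [A_succ n d (by omega)]
  have hApos := (A_pos n d).le
  calc A n d = (2:ℝ) ^ (-(s⁻¹)) * ((2:ℝ) ^ (s⁻¹) * A n d) := by
        rw [← mul_assoc, ← Real.rpow_add (by norm_num)]
        simp
    _ ≤ (2:ℝ) ^ (-(s⁻¹)) * (A n d * (((n : ℝ) + d + 1) / (2 * ((d : ℝ) + 1)))) := by
        apply mul_le_mul_of_nonneg_left _ (by positivity)
        rw [mul_comm ((2:ℝ) ^ (s⁻¹)) (A n d)]
        exact mul_le_mul_of_nonneg_left hratio hApos

lemma decay_right (n : ℕ) (hn : 2 ≤ n) (d : ℕ) (hd : (n:ℝ) + 9 * Real.sqrt n ≤ d) :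
    ∀ e : ℕ, A n (d + e) ≤ ((2:ℝ) ^ (-(Real.sqrt n)⁻¹)) ^ e * A n d := by
  intro e
  induction e with
  | zero => simp
  | succ i ih =>
    have hdi : (n:ℝ) + 9 * Real.sqrt n ≤ (d + i : ℕ) := by
      push_cast
      have : (0:ℝ) ≤ i := by positivity
      linarith
    have hstep := step_right n (d + i) hn hdi
    have ht : (0:ℝ) ≤ (2:ℝ) ^ (-(Real.sqrt n)⁻¹) :=
      (Real.rpow_pos_of_pos (by norm_num) _).le
    calc A n (d + (i + 1)) = A n ((d + i) + 1) := by ring_nf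
      _ ≤ (2:ℝ) ^ (-(Real.sqrt n)⁻¹) * A n (d + i) := hstep
      _ ≤ (2:ℝ) ^ (-(Real.sqrt n)⁻¹) * (((2:ℝ) ^ (-(Real.sqrt n)⁻¹)) ^ i * A n d) :=
          mul_le_mul_of_nonneg_left ih ht
      _ = ((2:ℝ) ^ (-(Real.sqrt n)⁻¹)) ^ (i + 1) * A n d := by ring

lemma decay_left (n : ℕ) (hn : 2 ≤ n) :
    ∀ e d : ℕ, ((d:ℝ) + e + 3 * Real.sqrt n ≤ n) →
      A n d ≤ ((2:ℝ) ^ (-(Real.sqrt n)⁻¹)) ^ e * A n (d + e) := by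
  intro e
  induction e with
  | zero => intro d _; simp
  | succ i ih =>
    intro d hd
    have ht : (0:ℝ) ≤ (2:ℝ) ^ (-(Real.sqrt n)⁻¹) :=
      (Real.rpow_pos_of_pos (by norm_num) _).le
    have h1 : (d:ℝ) + 3 * Real.sqrt n ≤ n := by
      push_cast at hd
      have : (0:ℝ) ≤ i := by positivity
      linarith
    have hih := ih (d + 1) (by push_cast; push_cast at hd; linarith)
    calc A n d ≤ (2:ℝ) ^ (-(Real.sqrt n)⁻¹) * A n (d + 1) := step_left n d hn h1
      _ ≤ (2:ℝ) ^ (-(Real.sqrt n)⁻¹)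
          * (((2:ℝ) ^ (-(Real.sqrt n)⁻¹)) ^ i * A n ((d + 1) + i)) :=
          mul_le_mul_of_nonneg_left hih ht
      _ = ((2:ℝ) ^ (-(Real.sqrt n)⁻¹)) ^ (i + 1) * A n (d + (i + 1)) := by
          rw [show (d + 1) + i = d + (i + 1) by omega]; ring

end FbinAux

open FbinAux in
/-- There is a constant `C > 0` such that `F_n(u) ≤ C · 2^{-|u|}` for every `n ≥ 2`
and every `u ≥ -√n`. -/
theorem Fbin_uniform_bound :
    ∃ C > (0 : ℝ), ∀ n : ℕ, 2 ≤ n → ∀ u : ℝ, -Real.sqrt n ≤ u →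
      Fbin n u ≤ C * (2 : ℝ) ^ (-|u|) := by
  refine ⟨4096, by norm_num, ?_⟩
  intro n hn u hu
  have hs14 := sqrt_ge n hn
  have hs0 : (0:ℝ) < Real.sqrt n := by linarith
  have hs2 : Real.sqrt n ^ 2 = n := Real.sq_sqrt (by positivity)
  have hn1 : 1 ≤ n := by omega
  have hkn : -(n:ℤ) ≤ ⌊u * Real.sqrt n⌋ := by
    rw [Int.le_floor]
    push_cast
    nlinarith [hu, hs0, hs2]
  obtain ⟨d, hd⟩ : ∃ d : ℕ, (d:ℤ) = n + ⌊u * Real.sqrt n⌋ :=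
    ⟨(n + ⌊u * Real.sqrt n⌋).toNat, Int.toNat_of_nonneg (by omega)⟩
  have hdr : (d:ℝ) = (n:ℝ) + (⌊u * Real.sqrt n⌋ : ℝ) := by exact_mod_cast hd
  have hM : (2 * (n : ℤ) + ⌊u * Real.sqrt n⌋).toNat = n + d := by omega
  have hF : Fbin n u = A n d * Real.sqrt n := by
    rw [Fbin, hM]
    unfold A
    ring
  have hfl_le : (⌊u * Real.sqrt n⌋ : ℝ) ≤ u * Real.sqrt n := Int.floor_le _
  have hfl_gt : u * Real.sqrt n - 1 < (⌊u * Real.sqrt n⌋ : ℝ) := Int.sub_one_lt_floor _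
  have htriv : A n d * Real.sqrt n ≤ 1 :=
    le_trans (mul_le_mul_of_nonneg_right (A_le_center n d hn1) hs0.le) (central n)
  have ht0 : (0:ℝ) < (2:ℝ) ^ (-(Real.sqrt n)⁻¹) := Real.rpow_pos_of_pos (by norm_num) _
  have h4096 : (4096:ℝ) = (2:ℝ) ^ (12:ℝ) := by
    rw [show (12:ℝ) = ((12:ℕ):ℝ) by norm_num, Real.rpow_natCast]; norm_num
  rcases le_or_gt |u| 12 with hcase | hcase
  · -- trivial region
    have h2 : (1:ℝ) ≤ 4096 * (2:ℝ) ^ (-|u|) := by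
      have hmono : (2:ℝ) ^ (-(12:ℝ)) ≤ (2:ℝ) ^ (-|u|) :=
        (Real.rpow_le_rpow_left_iff (by norm_num)).mpr (by linarith)
      have hv : (4096:ℝ) * (2:ℝ) ^ (-(12:ℝ)) = 1 := by
        rw [h4096, ← Real.rpow_add (by norm_num)]; norm_num
      nlinarith [hmono]
    calc Fbin n u = A n d * Real.sqrt n := hF
      _ ≤ 1 := htriv
      _ ≤ 4096 * (2:ℝ) ^ (-|u|) := h2
  · rcases le_or_gt 0 u with hupos | huneg
    · -- u > 12
      have hu12 : 12 < u := by rwa [abs_of_nonneg hupos] at hcase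
      have hus : 12 * Real.sqrt n < u * Real.sqrt n :=
        mul_lt_mul_of_pos_right hu12 hs0
      set K : ℕ := ⌈9 * Real.sqrt n⌉₊ with hK
      have hK1 : 9 * Real.sqrt n ≤ K := Nat.le_ceil _
      have hK2 : (K:ℝ) ≤ 9 * Real.sqrt n + 1 :=
        le_of_lt (Nat.ceil_lt_add_one (by positivity))
      have hd0d : n + K ≤ d := by
        have hr : ((n + K : ℕ):ℝ) ≤ (d:ℝ) := by
          push_cast
          linarith [hdr, hfl_gt, hK2, hus, hs14]
        exact_mod_cast hr
      obtain ⟨e, he⟩ : ∃ e, d = (n + K) + e := ⟨d - (n + K), by omega⟩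
      have hdec := decay_right n hn (n + K) (by push_cast; linarith) e
      rw [← he] at hdec
      have hAn : A n (n + K) ≤ A n n := A_le_center n (n + K) hn1
      have htpow : ((2:ℝ) ^ (-(Real.sqrt n)⁻¹)) ^ e = (2:ℝ) ^ (-(Real.sqrt n)⁻¹ * e) := by
        rw [← Real.rpow_natCast ((2:ℝ) ^ (-(Real.sqrt n)⁻¹)) e,
          ← Real.rpow_mul (by norm_num)]
      have hexp : (2:ℝ) ^ (-(Real.sqrt n)⁻¹ * e) ≤ 4096 * (2:ℝ) ^ (-|u|) := by
        rw [abs_of_nonneg hupos, h4096, ← Real.rpow_add (by norm_num)]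
        apply (Real.rpow_le_rpow_left_iff (by norm_num)).mpr
        have he' : (e:ℝ) = (d:ℝ) - (n:ℝ) - K := by rw [he]; push_cast; ring
        have hse : Real.sqrt n * (u - 12) ≤ e := by
          rw [he']
          linarith [hdr, hfl_gt, hK2, hs14]
        have hfin : u - 12 ≤ (Real.sqrt n)⁻¹ * e := by
          have := mul_le_mul_of_nonneg_left hse (inv_nonneg.mpr hs0.le)
          rwa [← mul_assoc, inv_mul_cancel₀ hs0.ne', one_mul] at this
        linarith
      calc Fbin n u = A n d * Real.sqrt n := hF
        _ ≤ (((2:ℝ) ^ (-(Real.sqrt n)⁻¹)) ^ e * A n (n + K)) * Real.sqrt n :=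
            mul_le_mul_of_nonneg_right hdec hs0.le
        _ = ((2:ℝ) ^ (-(Real.sqrt n)⁻¹)) ^ e * (A n (n + K) * Real.sqrt n) := by ring
        _ ≤ ((2:ℝ) ^ (-(Real.sqrt n)⁻¹)) ^ e * 1 := by
            apply mul_le_mul_of_nonneg_left _ (by positivity)
            exact le_trans (mul_le_mul_of_nonneg_right hAn hs0.le) (central n)
        _ = (2:ℝ) ^ (-(Real.sqrt n)⁻¹ * e) := by rw [mul_one, htpow]
        _ ≤ 4096 * (2:ℝ) ^ (-|u|) := hexp
    · -- u < -12
      have hu12 : 12 < -u := by rwa [abs_of_neg huneg] at hcase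
      have hsu : -u ≤ Real.sqrt n := by linarith
      have hs12 : 12 < Real.sqrt n := by linarith
      set L : ℕ := ⌈3 * Real.sqrt n⌉₊ with hL
      have hL1 : 3 * Real.sqrt n ≤ L := Nat.le_ceil _
      have hL2 : (L:ℝ) ≤ 3 * Real.sqrt n + 1 :=
        le_of_lt (Nat.ceil_lt_add_one (by positivity))
      have hLn : L ≤ n := by
        have : (L:ℝ) ≤ (n:ℝ) := by nlinarith [hs2, hs12]
        exact_mod_cast this
      have hd1r : ((n - L : ℕ):ℝ) = (n:ℝ) - (L:ℝ) := by
        push_cast [hLn]; ring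
      have hus : u * Real.sqrt n ≤ -12 * Real.sqrt n :=
        mul_le_mul_of_nonneg_right (by linarith) hs0.le
      have hdd1 : d ≤ n - L := by
        have hr : (d:ℝ) ≤ ((n - L : ℕ):ℝ) := by
          rw [hd1r, hdr]
          linarith [hfl_le, hus, hL2, hs14]
        exact_mod_cast hr
      obtain ⟨e, he⟩ : ∃ e, n - L = d + e := ⟨n - L - d, by omega⟩
      have hhyp : (d:ℝ) + e + 3 * Real.sqrt n ≤ n := by
        have : ((d + e : ℕ):ℝ) = (n:ℝ) - L := by rw [← he, hd1r]
        push_cast at this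
        linarith
      have hdec := decay_left n hn e d hhyp
      rw [← he] at hdec
      have hAn : A n (n - L) ≤ A n n := A_le_center n (n - L) hn1
      have htpow : ((2:ℝ) ^ (-(Real.sqrt n)⁻¹)) ^ e = (2:ℝ) ^ (-(Real.sqrt n)⁻¹ * e) := by
        rw [← Real.rpow_natCast ((2:ℝ) ^ (-(Real.sqrt n)⁻¹)) e,
          ← Real.rpow_mul (by norm_num)]
      have hexp : (2:ℝ) ^ (-(Real.sqrt n)⁻¹ * e) ≤ 4096 * (2:ℝ) ^ (-|u|) := by
        rw [abs_of_neg huneg, neg_neg, h4096, ← Real.rpow_add (by norm_num)]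
        apply (Real.rpow_le_rpow_left_iff (by norm_num)).mpr
        have he' : (e:ℝ) = (n:ℝ) - (L:ℝ) - d := by
          have : ((d + e : ℕ):ℝ) = (n:ℝ) - L := by rw [← he, hd1r]
          push_cast at this
          linarith
        have hse : Real.sqrt n * (-u - 12) ≤ e := by
          rw [he']
          linarith [hdr, hfl_le, hL2, hs14]
        have hfin : -u - 12 ≤ (Real.sqrt n)⁻¹ * e := by
          have := mul_le_mul_of_nonneg_left hse (inv_nonneg.mpr hs0.le)
          rwa [← mul_assoc, inv_mul_cancel₀ hs0.ne', one_mul] at this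
        linarith
      calc Fbin n u = A n d * Real.sqrt n := hF
        _ ≤ (((2:ℝ) ^ (-(Real.sqrt n)⁻¹)) ^ e * A n (n - L)) * Real.sqrt n :=
            mul_le_mul_of_nonneg_right hdec hs0.le
        _ = ((2:ℝ) ^ (-(Real.sqrt n)⁻¹)) ^ e * (A n (n - L) * Real.sqrt n) := by ring
        _ ≤ ((2:ℝ) ^ (-(Real.sqrt n)⁻¹)) ^ e * 1 := by
            apply mul_le_mul_of_nonneg_left _ (by positivity)
            exact le_trans (mul_le_mul_of_nonneg_right hAn hs0.le) (central n)
        _ = (2:ℝ) ^ (-(Real.sqrt n)⁻¹ * e) := by rw [mul_one, htpow]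
        _ ≤ 4096 * (2:ℝ) ^ (-|u|) := hexp
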